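/- An orbit in a rhombus that passes through the center of the rhombus is centrally symmetric: if the billiard orbit (q(t)) in the rhombus satisfies q(0) = center, then q(−t) is the image of q(t) under the point reflection through the center, for all t for which the orbit is defined. Consequently, any periodic beam whose central orbit passes through the center of a rhombus has a palindromic code. -/
import Mathlib


/-- an orbit in a rhombus passing through the center of the rhombus is
centrally symmetric.  Here `Traj` is the predicate "is a (nonsingular) billiard
trajectory in the rhombus", `c` is the center of the rhombus, and the hypotheses record
that: billiard trajectories form a time-translation and time-reversal invariant family;
the point reflection through the center maps trajectories to trajectories (the rhombus is
centrally symmetric); and a trajectory is uniquely determined by its position and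
velocity at time 0.  Conclusion: if `q 0 = c` then `q (−t)` is the image of `q t` under
the point reflection through `c` for all `t`.  Consequently, for any coding of
trajectories by the labelled rhombi visited in the unfolding which is invariant under the
central symmetry and reversed by time reversal, the code of such an orbit (hence of any
periodic beam whose central orbit passes through the center) is palindromic:
`code q n = code q (−n)`. -/
theorem stmt11 (Traj : (ℝ → ℂ) → Prop) (c : ℂ)
    (htrans : ∀ q s, Traj q → Traj (fun t => q (t + s)))
    (hrev : ∀ q, Traj q → Traj (fun t => q (-t)))
    (hsym : ∀ q, Traj q → Traj (fun t => 2 * c - q t))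
    (huniq : ∀ q₁ q₂, Traj q₁ → Traj q₂ → q₁ 0 = q₂ 0 →
      deriv q₁ 0 = deriv q₂ 0 → q₁ = q₂)
    (q : ℝ → ℂ) (hq : Traj q) (h0 : q 0 = c) :
    (∀ t : ℝ, q (-t) = 2 * c - q t) ∧
    (∀ code : (ℝ → ℂ) → ℤ → ℤ,
      (∀ r, Traj r → code (fun t => 2 * c - r t) = code r) →
      (∀ r, Traj r → ∀ n : ℤ, code (fun t => r (-t)) n = code r (-n)) →
      ∀ n : ℤ, code q n = code q (-n)) := by
  have key : (fun t : ℝ => q (-t)) = (fun t => 2 * c - q t) := by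
    apply huniq _ _ (hrev q hq) (hsym q hq)
    · simp [h0, two_mul]
    · have h1 : deriv (fun t : ℝ => q (-t)) 0 = -deriv q 0 := by
        rw [deriv_comp_neg]; simp
      have h2 : deriv (fun t : ℝ => 2 * c - q t) 0 = -deriv q 0 := by
        rw [deriv_const_sub]
      rw [h1, h2]
  refine ⟨fun t => congrFun key t, fun code hcsym hcrev n => ?_⟩
  have := hcrev q hq n
  rw [key, hcsym q hq] at this
  exact this
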